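/- Let f : ℝⁿ → ℝ be convex, c ∈ ℝⁿ, and 0 < λ₁ ≤ λ₂. Let y₁ be a global minimizer of y ↦ f(y) + (1/(2λ₁))·‖y − c‖² and y₂ a global minimizer of y ↦ f(y) + (1/(2λ₂))·‖y − c‖². Then ‖y₁ − c‖ ≤ ‖y₂ − c‖ and λ₁·‖y₂ − c‖ ≤ λ₂·‖y₁ − c‖. -/

import Mathlib

open scoped RealInnerProductSpace

/-- First-order optimality-type inequality for a minimizer of
`z ↦ f z + a * ‖z - c‖²` when `f` is convex. -/
lemma prox_aux {n : ℕ} {f : EuclideanSpace ℝ (Fin n) → ℝ}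
    (hf : ConvexOn ℝ Set.univ f) {a : ℝ} (ha : 0 < a)
    {c y : EuclideanSpace ℝ (Fin n)}
    (hy : ∀ z, f y + a * ‖y - c‖ ^ 2 ≤ f z + a * ‖z - c‖ ^ 2)
    (w : EuclideanSpace ℝ (Fin n)) :
    f y - f w ≤ 2 * a * ⟪y - c, w - y⟫ := by
  have key : ∀ t : ℝ, 0 < t → t ≤ 1 →
      f y - f w ≤ 2 * a * ⟪y - c, w - y⟫ + a * t * ‖w - y‖ ^ 2 := by
    intro t ht ht1
    have hz := hy (y + t • (w - y))
    have hconv := hf.2 (Set.mem_univ y) (Set.mem_univ w)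
      (sub_nonneg.mpr ht1) ht.le (by ring)
    have heq : (1 - t) • y + t • w = y + t • (w - y) := by module
    rw [heq] at hconv
    have hnorm : ‖y + t • (w - y) - c‖ ^ 2
        = ‖y - c‖ ^ 2 + 2 * (t * ⟪y - c, w - y⟫) + t ^ 2 * ‖w - y‖ ^ 2 := by
      have h0 : y + t • (w - y) - c = (y - c) + t • (w - y) := by abel
      rw [h0, norm_add_sq_real, real_inner_smul_right, norm_smul,
        Real.norm_eq_abs, mul_pow, sq_abs]
    rw [hnorm] at hz
    simp only [smul_eq_mul] at hconv
    have h3 : t * (f y - f w) ≤ t * (2 * a * ⟪y - c, w - y⟫ + a * t * ‖w - y‖ ^ 2) := by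
      nlinarith [hz, hconv]
    exact (mul_le_mul_iff_right₀ ht).mp h3
  refine le_of_forall_pos_le_add ?_
  intro ε hε
  set K := a * ‖w - y‖ ^ 2 with hKdef
  have hK : 0 ≤ K := by positivity
  have hK1 : 0 < K + 1 := by linarith
  set t := min 1 (ε / (K + 1)) with htdef
  have ht0 : 0 < t := lt_min one_pos (div_pos hε hK1)
  have ht1 : t ≤ 1 := min_le_left _ _
  have hkey := key t ht0 ht1
  have htle : t ≤ ε / (K + 1) := min_le_right _ _
  have h4 : t * (K + 1) ≤ ε := by
    rw [← le_div_iff₀ hK1]; exact htle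
  have h5 : a * t * ‖w - y‖ ^ 2 ≤ ε := by
    have : a * t * ‖w - y‖ ^ 2 = t * K := by rw [hKdef]; ring
    nlinarith
  linarith

theorem prox_residual_monotone
    (n : ℕ) (f : EuclideanSpace ℝ (Fin n) → ℝ)
    (hf : ConvexOn ℝ Set.univ f) (c : EuclideanSpace ℝ (Fin n))
    (lam₁ lam₂ : ℝ) (h1 : 0 < lam₁) (h12 : lam₁ ≤ lam₂)
    (y₁ y₂ : EuclideanSpace ℝ (Fin n))
    (hy₁ : ∀ z : EuclideanSpace ℝ (Fin n),
      f y₁ + 1 / (2 * lam₁) * ‖y₁ - c‖ ^ 2 ≤ f z + 1 / (2 * lam₁) * ‖z - c‖ ^ 2)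
    (hy₂ : ∀ z : EuclideanSpace ℝ (Fin n),
      f y₂ + 1 / (2 * lam₂) * ‖y₂ - c‖ ^ 2 ≤ f z + 1 / (2 * lam₂) * ‖z - c‖ ^ 2) :
    ‖y₁ - c‖ ≤ ‖y₂ - c‖ ∧ lam₁ * ‖y₂ - c‖ ≤ lam₂ * ‖y₁ - c‖ := by
  have h2 : (0:ℝ) < lam₂ := lt_of_lt_of_le h1 h12
  have ha1 : (0:ℝ) < 1 / (2 * lam₁) := by positivity
  have ha2 : (0:ℝ) < 1 / (2 * lam₂) := by positivity
  have hA := prox_aux hf ha1 hy₁ y₂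
  have hB := prox_aux hf ha2 hy₂ y₁
  have e1 : y₂ - y₁ = (y₂ - c) - (y₁ - c) := by abel
  have e2 : y₁ - y₂ = (y₁ - c) - (y₂ - c) := by abel
  rw [e1, inner_sub_right, real_inner_self_eq_norm_sq] at hA
  rw [e2, inner_sub_right, real_inner_self_eq_norm_sq] at hB
  set s := ‖y₁ - c‖ with hs
  set t := ‖y₂ - c‖ with ht
  have hs0 : 0 ≤ s := norm_nonneg _
  have ht0 : 0 ≤ t := norm_nonneg _
  set p : ℝ := ⟪y₁ - c, y₂ - c⟫ with hp
  have hcomm : ⟪y₂ - c, y₁ - c⟫ = p := real_inner_comm _ _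
  rw [hcomm] at hB
  have hcs : p ≤ s * t := real_inner_le_norm _ _
  -- combine hA + hB : 0 ≤ 2a₁(p - s²) + 2a₂(p - t²)
  have hsum : 0 ≤ 2 * (1 / (2 * lam₁)) * (p - s ^ 2) + 2 * (1 / (2 * lam₂)) * (p - t ^ 2) := by
    linarith
  have hmain : lam₂ * s ^ 2 + lam₁ * t ^ 2 ≤ (lam₁ + lam₂) * p := by
    have hl1 : (2 * (1 / (2 * lam₁))) * lam₁ = 1 := by field_simp
    have hl2 : (2 * (1 / (2 * lam₂))) * lam₂ = 1 := by field_simp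
    nlinarith [mul_nonneg (mul_nonneg (le_of_lt (mul_pos h1 h2)) (le_of_lt ha1)) (le_of_lt ha2)]
  have hkey : (s - t) * (lam₂ * s - lam₁ * t) ≤ 0 := by nlinarith
  constructor
  · by_contra hlt
    push_neg at hlt
    have h6 : lam₂ * s - lam₁ * t ≤ 0 := by nlinarith
    have h7 := mul_le_mul_of_nonneg_right h12 ht0
    have h8 := mul_lt_mul_of_pos_left hlt h2
    linarith
  · by_contra hlt
    push_neg at hlt
    have h6 : 0 ≤ s - t := by nlinarith
    have h7 := mul_le_mul_of_nonneg_left (by linarith : t ≤ s) h1.le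
    have h8 := mul_le_mul_of_nonneg_right h12 hs0
    linarith
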